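/- For every real B > 0, every integer x ≥ 1, and every nonnegative integer p, ∫_x^∞ (sin((2p+1)πξ)/sin(πξ)) e^{-Bξ²} dξ = (1/2)√(π/B) ∑_{k=-p}^{p} e^{-π²k²/B} Re[erfc(√B x - iπk/√B)], where erfc(z) = (2/√π)∫_z^∞ e^{-t²} dt is the complementary error function (extended to complex arguments), and the left-hand kernel is extended continuously at integer points. -/

import Mathlib

open Real MeasureTheory Set

/-- The grating kernel `sin((2p+1)πx)/sin(πx)`, extended continuously
(to the value `2p+1`) at integer points. -/
noncomputable def graux (p : ℕ) (x : ℝ) : ℝ :=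
  if Real.sin (Real.pi * x) = 0 then (2 * p + 1 : ℝ)
  else Real.sin ((2 * p + 1) * Real.pi * x) / Real.sin (Real.pi * x)

/-- The complementary error function extended to complex arguments:
`erfc(z) = (2/√π) ∫_0^∞ e^{-(z+t)²} dt`. -/
noncomputable def cerfc (z : ℂ) : ℂ :=
  2 / Real.sqrt Real.pi * ∫ t in Set.Ioi (0 : ℝ), Complex.exp (-(z + (t : ℝ)) ^ 2)

lemma dirichlet_id (p : ℕ) (ξ : ℝ) :
    Real.sin (Real.pi * ξ) * ∑ k ∈ Finset.Icc (-(p : ℤ)) (p : ℤ), Real.cos (2 * Real.pi * k * ξ)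
      = Real.sin ((2 * p + 1) * Real.pi * ξ) := by
  induction p with
  | zero => simp
  | succ p ih =>
    have hset : Finset.Icc (-(p + 1 : ℤ)) ((p : ℤ) + 1)
        = insert (-(p + 1 : ℤ)) (insert ((p : ℤ) + 1) (Finset.Icc (-(p : ℤ)) (p : ℤ))) := by
      ext k; simp [Finset.mem_Icc]; omega
    push_cast
    rw [hset, Finset.sum_insert (by simp only [Finset.mem_insert, Finset.mem_Icc]; omega),
        Finset.sum_insert (by simp only [Finset.mem_Icc]; omega)]
    push_cast
    have h1 : 2 * Real.pi * (-((p : ℝ) + 1)) * ξ = -(2 * Real.pi * ((p : ℝ) + 1) * ξ) := by ring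
    rw [h1, Real.cos_neg]
    have h2 : (2 * ((p : ℝ) + 1) + 1) * Real.pi * ξ
        = 2 * Real.pi * ((p : ℝ) + 1) * ξ + Real.pi * ξ := by ring
    have h3 : (2 * (p : ℝ) + 1) * Real.pi * ξ
        = 2 * Real.pi * ((p : ℝ) + 1) * ξ - Real.pi * ξ := by ring
    rw [h2, Real.sin_add]
    rw [h3, Real.sin_sub] at ih
    nlinarith [ih]

lemma shift_Ioi (f : ℝ → ℂ) (a c : ℝ) :
    ∫ x in Ioi a, f (x - c) = ∫ x in Ioi (a - c), f x := by
  rw [← integral_indicator measurableSet_Ioi, ← integral_indicator measurableSet_Ioi]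
  rw [← integral_sub_right_eq_self (Set.indicator (Ioi (a - c)) f) c]
  congr 1; ext x
  by_cases h : x ∈ Ioi a
  · rw [Set.indicator_of_mem h, Set.indicator_of_mem (by simpa using sub_lt_sub_right h.out c)]
  · rw [Set.indicator_of_notMem h, Set.indicator_of_notMem
      (by simp only [mem_Ioi, not_lt] at h ⊢; linarith)]

lemma key_complex (B : ℝ) (hB : 0 < B) (a : ℝ) (k : ℤ) :
    ∫ ξ in Ioi a, Complex.exp (-(B : ℂ) * (ξ : ℝ) ^ 2 + 2 * Real.pi * Complex.I * k * (ξ : ℝ))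
      = (Real.sqrt Real.pi / (2 * Real.sqrt B) * Real.exp (-Real.pi ^ 2 * k ^ 2 / B) : ℝ) *
        cerfc ((Real.sqrt B * a : ℝ) - Complex.I * Real.pi * k / (Real.sqrt B : ℝ)) := by
  have hsB : (0 : ℝ) < Real.sqrt B := Real.sqrt_pos.mpr hB
  have hBne : ((Real.sqrt B : ℝ) : ℂ) ≠ 0 := by simpa using hsB.ne'
  have hBsq : ((B : ℝ) : ℂ) = ((Real.sqrt B : ℝ) : ℂ) ^ 2 := by
    rw [← Complex.ofReal_pow, Real.sq_sqrt hB.le]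
  set f : ℝ → ℂ :=
    fun t => Complex.exp (-(((t : ℝ) : ℂ) - Complex.I * Real.pi * k / (Real.sqrt B : ℝ)) ^ 2)
    with hf
  have step1 : ∀ ξ : ℝ,
      Complex.exp (-(B : ℂ) * (ξ : ℝ) ^ 2 + 2 * Real.pi * Complex.I * k * (ξ : ℝ))
        = (Real.exp (-Real.pi ^ 2 * k ^ 2 / B) : ℝ) * f (Real.sqrt B * ξ) := by
    intro ξ
    rw [hf]
    simp only
    rw [show ((Real.exp (-Real.pi ^ 2 * k ^ 2 / B) : ℝ) : ℂ)
        = Complex.exp (((-Real.pi ^ 2 * k ^ 2 / B : ℝ) : ℂ)) by rw [Complex.ofReal_exp],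
      ← Complex.exp_add]
    congr 1
    push_cast
    rw [hBsq]
    field_simp
    ring_nf
    rw [Complex.I_sq]
    ring
  simp_rw [step1]
  rw [MeasureTheory.integral_const_mul]
  rw [integral_comp_mul_left_Ioi f a hsB]
  have hshift : ∫ t in Ioi (Real.sqrt B * a), f t
      = ∫ t in Ioi (0 : ℝ), f (t + Real.sqrt B * a) := by
    have := shift_Ioi (fun t => f (t + Real.sqrt B * a)) (Real.sqrt B * a) (Real.sqrt B * a)
    simp only [sub_add_cancel, sub_self] at this
    exact this
  rw [hshift]
  have hval : ∫ t in Ioi (0 : ℝ), f (t + Real.sqrt B * a)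
      = ∫ t in Ioi (0 : ℝ), Complex.exp
          (-((((Real.sqrt B * a : ℝ)) : ℂ) - Complex.I * Real.pi * k / (Real.sqrt B : ℝ)
            + (t : ℝ)) ^ 2) := by
    refine setIntegral_congr_fun measurableSet_Ioi fun t _ => ?_
    rw [hf]
    simp only
    push_cast
    ring_nf
  rw [hval]
  have hcerfc : (∫ t in Ioi (0 : ℝ), Complex.exp
          (-((((Real.sqrt B * a : ℝ)) : ℂ) - Complex.I * Real.pi * k / (Real.sqrt B : ℝ)
            + (t : ℝ)) ^ 2))
      = (Real.sqrt Real.pi / 2 : ℝ) *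
        cerfc ((Real.sqrt B * a : ℝ) - Complex.I * Real.pi * k / (Real.sqrt B : ℝ)) := by
    rw [cerfc]
    have hpi : ((Real.sqrt Real.pi : ℝ) : ℂ) ≠ 0 := by
      simpa using (Real.sqrt_pos.mpr Real.pi_pos).ne'
    push_cast
    field_simp
  rw [hcerfc]
  rw [Complex.real_smul]
  push_cast
  field_simp

lemma norm_exp_aux (B : ℝ) (k : ℤ) (ξ : ℝ) :
    ‖Complex.exp (-(B : ℂ) * (ξ : ℝ) ^ 2 + 2 * Real.pi * Complex.I * k * (ξ : ℝ))‖
      = Real.exp (-B * ξ ^ 2) := by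
  rw [Complex.norm_exp]
  congr 1
  simp [Complex.add_re, Complex.mul_re, Complex.mul_im, ← Complex.ofReal_pow]

lemma integrable_aux (B : ℝ) (hB : 0 < B) (a : ℝ) (k : ℤ) :
    IntegrableOn (fun ξ : ℝ =>
      Complex.exp (-(B : ℂ) * (ξ : ℝ) ^ 2 + 2 * Real.pi * Complex.I * k * (ξ : ℝ)))
      (Ioi a) := by
  have hc : Continuous fun ξ : ℝ =>
      Complex.exp (-(B : ℂ) * (ξ : ℝ) ^ 2 + 2 * Real.pi * Complex.I * k * (ξ : ℝ)) := by
    fun_prop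
  refine Integrable.mono' ((integrable_exp_neg_mul_sq hB).integrableOn)
    hc.aestronglyMeasurable.restrict ?_
  filter_upwards with ξ
  rw [norm_exp_aux]

lemma key_real (B : ℝ) (hB : 0 < B) (a : ℝ) (k : ℤ) :
    ∫ ξ in Ioi a, Real.cos (2 * Real.pi * k * ξ) * Real.exp (-B * ξ ^ 2)
      = Real.sqrt Real.pi / (2 * Real.sqrt B) * Real.exp (-Real.pi ^ 2 * k ^ 2 / B) *
        (cerfc ((Real.sqrt B * a : ℝ) - Complex.I * Real.pi * k / (Real.sqrt B : ℝ))).re := by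
  have heq : ∀ ξ : ℝ, Real.cos (2 * Real.pi * k * ξ) * Real.exp (-B * ξ ^ 2)
      = (Complex.exp (-(B : ℂ) * (ξ : ℝ) ^ 2 + 2 * Real.pi * Complex.I * k * (ξ : ℝ))).re := by
    intro ξ
    rw [Complex.exp_re]
    have h1 : (-(B : ℂ) * (ξ : ℝ) ^ 2 + 2 * Real.pi * Complex.I * k * (ξ : ℝ)).re
        = -B * ξ ^ 2 := by
      simp [Complex.add_re, Complex.mul_re, Complex.mul_im, ← Complex.ofReal_pow]
    have h2 : (-(B : ℂ) * (ξ : ℝ) ^ 2 + 2 * Real.pi * Complex.I * k * (ξ : ℝ)).im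
        = 2 * Real.pi * k * ξ := by
      simp [Complex.add_im, Complex.mul_re, Complex.mul_im, ← Complex.ofReal_pow]
    rw [h1, h2]; ring
  simp_rw [heq, ← RCLike.re_eq_complex_re]
  rw [integral_re (integrable_aux B hB a k), RCLike.re_eq_complex_re,
    key_complex B hB a k, Complex.re_ofReal_mul]

/-- `∫_x^∞ K_p(ξ) e^{-Bξ²} dξ
  = (1/2)√(π/B) ∑_{k=-p}^p e^{-π²k²/B} Re erfc(√B x − iπk/√B)`. -/
theorem grating_gaussian_integral (B : ℝ) (hB : 0 < B) (x : ℤ) (hx : 1 ≤ x) (p : ℕ) :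
    (∫ ξ in Set.Ioi ((x : ℝ)), graux p ξ * Real.exp (-B * ξ ^ 2)) =
      1 / 2 * Real.sqrt (Real.pi / B) *
        ∑ k ∈ Finset.Icc (-(p : ℤ)) (p : ℤ),
          Real.exp (-Real.pi ^ 2 * (k : ℝ) ^ 2 / B) *
            (cerfc ((Real.sqrt B * (x : ℝ) : ℝ) -
              Complex.I * Real.pi * (k : ℤ) / (Real.sqrt B : ℝ))).re := by
  have h0 : volume {ξ : ℝ | Real.sin (Real.pi * ξ) = 0} = 0 := by
    refine measure_mono_null (fun ξ hξ => ?_) ((Set.countable_range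
      (fun n : ℤ => (n : ℝ))).measure_zero _)
    obtain ⟨n, hn⟩ := Real.sin_eq_zero_iff.mp hξ
    exact ⟨n, mul_left_cancel₀ Real.pi_ne_zero (by linarith)⟩
  have hae : ∀ᵐ ξ : ℝ, ξ ∈ Ioi ((x : ℝ)) → graux p ξ * Real.exp (-B * ξ ^ 2)
      = (∑ k ∈ Finset.Icc (-(p : ℤ)) (p : ℤ), Real.cos (2 * Real.pi * k * ξ)) *
        Real.exp (-B * ξ ^ 2) := by
    rw [ae_iff]
    refine measure_mono_null (fun ξ hξ => ?_) h0
    simp only [Set.mem_setOf_eq, not_forall] at hξ ⊢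
    by_contra hs
    apply hξ.2
    have hs' : Real.sin (Real.pi * ξ) ≠ 0 := hs
    rw [graux, if_neg hs', eq_comm, ← dirichlet_id p ξ, mul_comm (Real.sin (Real.pi * ξ)),
      mul_div_assoc, div_self hs', mul_one]
  rw [setIntegral_congr_ae measurableSet_Ioi hae]
  have hint : ∀ k ∈ Finset.Icc (-(p : ℤ)) (p : ℤ), IntegrableOn
      (fun ξ : ℝ => Real.cos (2 * Real.pi * k * ξ) * Real.exp (-B * ξ ^ 2)) (Ioi ((x : ℝ))) := by
    intro k _
    refine Integrable.mono' ((integrable_exp_neg_mul_sq hB).integrableOn)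
      (Continuous.aestronglyMeasurable (by fun_prop)).restrict ?_
    filter_upwards with ξ
    rw [norm_mul, Real.norm_eq_abs, Real.norm_eq_abs, abs_of_pos (Real.exp_pos _)]
    calc |Real.cos (2 * Real.pi * k * ξ)| * Real.exp (-B * ξ ^ 2)
        ≤ 1 * Real.exp (-B * ξ ^ 2) := by
          gcongr; exact Real.abs_cos_le_one _
      _ = Real.exp (-B * ξ ^ 2) := one_mul _
  simp_rw [Finset.sum_mul]
  rw [MeasureTheory.integral_finset_sum _ hint, Finset.mul_sum]
  refine Finset.sum_congr rfl fun k _ => ?_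
  rw [key_real B hB (x : ℝ) k]
  rw [Real.sqrt_div Real.pi_pos.le]
  push_cast
  ring
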